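/- For n ≥ 1, |S_n| = 2(w_n − 2) + 3(w_n − 2)² − 6(w_n − w_{n−1})(w_n − w_{n−1} − 1). -/

import Mathlib

/-- The sequence `w_{2k} = 3·2^k`, `w_{2k+1} = 4·2^k`. -/
def w (n : ℕ) : ℤ := if n % 2 = 0 then 3 * 2 ^ (n / 2) else 4 * 2 ^ (n / 2)

/-- `E a b` : lattice points with `|x| ≤ a`, `|y| ≤ a`, `|x|+|y| ≤ b`. -/
noncomputable def E (a b : ℤ) : Finset (ℤ × ℤ) :=
  (Finset.Icc (-a) a ×ˢ Finset.Icc (-a) a).filter fun p => |p.1| + |p.2| ≤ b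

noncomputable def Oct (n : ℕ) : Finset (ℤ × ℤ) := E (w n - 2) (w (n + 1) - 3)

noncomputable def S (n : ℕ) : Finset (ℤ × ℤ) := (Oct n).filter fun p => ¬ (2 ∣ p.1 ∧ 2 ∣ p.2)

open Finset

lemma sum_Icc_id' (m n : ℤ) (h : m - 1 ≤ n) :
    2 * ∑ x ∈ Icc m n, x = (n + m) * (n + 1 - m) := by
  refine Int.le_induction (m := m - 1)
    (motive := fun n _ => 2 * ∑ x ∈ Icc m n, x = (n + m) * (n + 1 - m)) ?_ ?_ n h
  · show 2 * ∑ x ∈ Icc m (m-1), x = _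
    rw [show Icc m (m-1) = ∅ by apply Icc_eq_empty; omega]; simp
  · intro n hn ih
    show 2 * ∑ x ∈ Icc m (n+1), x = _
    have hins : Icc m (n + 1) = insert (n+1) (Icc m n) := by
      ext x; simp only [mem_insert, mem_Icc]; omega
    rw [hins, Finset.sum_insert (by simp only [mem_Icc, not_and] ; omega)]
    ring_nf; ring_nf at ih; linarith

lemma sum_linear (m n p q : ℤ) (h : m - 1 ≤ n) :
    2 * ∑ x ∈ Icc m n, (p + q * x) = 2*(n+1-m)*p + q * ((n+m)*(n+1-m)) := by
  have hg := sum_Icc_id' m n h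
  rw [Finset.sum_add_distrib, Finset.sum_const, ← Finset.mul_sum, Int.card_Icc,
    nsmul_eq_mul]
  rw [Int.toNat_of_nonneg (by omega : (0:ℤ) ≤ n + 1 - m)]
  linear_combination q * hg

lemma card_E (a b : ℤ) (h0 : 0 ≤ a) (hab : a ≤ b) (hb : b ≤ 2 * a) :
    ((E a b).card : ℤ) = (2*a+1)^2 - 2*(2*a-b)*(2*a-b+1) := by
  classical
  have hdecomp : E a b = (Icc (-a) a).biUnion (fun x =>
      ((Icc (-(min a (b - |x|))) (min a (b - |x|)))).image (fun y => (x, y))) := by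
    ext p
    simp only [E, mem_filter, mem_product, mem_Icc, mem_biUnion, mem_image,
      Int.abs_eq_natAbs, le_min_iff, min_le_iff, Prod.ext_iff]
    constructor
    · rintro ⟨⟨⟨h1,h2⟩,h3,h4⟩, h5⟩
      exact ⟨p.1, ⟨by omega, by omega⟩, p.2, by omega, rfl, rfl⟩
    · rintro ⟨x, ⟨hx1, hx2⟩, y, hy, h1, h2⟩
      subst h1; subst h2
      refine ⟨⟨⟨hx1, hx2⟩, ?_, ?_⟩, ?_⟩ <;> omega
  rw [hdecomp, card_biUnion]
  swap
  · intro x hx y hy hxy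
    simp only [Finset.disjoint_left, mem_image]
    rintro p ⟨u, hu, rfl⟩ ⟨v, hv, hv2⟩
    exact hxy (congrArg Prod.fst hv2).symm
  push_cast
  have hcard : ∀ x ∈ Icc (-a) a,
      ((((Icc (-(min a (b - |x|))) (min a (b - |x|)))).image (fun y => (x, y))).card : ℤ)
        = 2 * min a (b - |x|) + 1 := by
    intro x hx
    rw [Finset.card_image_of_injective _ (by intro u v h; simpa using h),
      Int.card_Icc]
    simp only [mem_Icc] at hx
    rw [Int.abs_eq_natAbs]
    omega
  rw [Finset.sum_congr rfl hcard]
  set c : ℤ := b - a with hc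
  have hsub : Icc (-c) c ⊆ Icc (-a) a := Icc_subset_Icc (by omega) (by omega)
  rw [← Finset.sum_sdiff hsub]
  have hsd : Icc (-a) a \ Icc (-c) c = Icc (-a) (-(c+1)) ∪ Icc (c+1) a := by
    ext x; simp only [mem_sdiff, mem_union, mem_Icc, not_and, not_le]; omega
  have hdisj : Disjoint (Icc (-a) (-(c+1))) (Icc (c+1) a) := by
    simp only [Finset.disjoint_left, mem_Icc]; intro x hx hx2; omega
  rw [hsd, Finset.sum_union hdisj]
  have e1 : ∑ x ∈ Icc (-a) (-(c+1)), (2 * min a (b - |x|) + 1)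
      = ∑ x ∈ Icc (-a) (-(c+1)), ((2*b+1) + 2 * x) := by
    apply Finset.sum_congr rfl; intro x hx
    simp only [mem_Icc] at hx
    rw [Int.abs_eq_natAbs]; omega
  have e2 : ∑ x ∈ Icc (c+1) a, (2 * min a (b - |x|) + 1)
      = ∑ x ∈ Icc (c+1) a, ((2*b+1) + (-2) * x) := by
    apply Finset.sum_congr rfl; intro x hx
    simp only [mem_Icc] at hx
    rw [Int.abs_eq_natAbs]; omega
  have e3 : ∑ x ∈ Icc (-c) c, (2 * min a (b - |x|) + 1)
      = ∑ x ∈ Icc (-c) c, ((2*a+1) + 0 * x) := by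
    apply Finset.sum_congr rfl; intro x hx
    simp only [mem_Icc] at hx
    rw [Int.abs_eq_natAbs]; omega
  rw [e1, e2, e3]
  have g1 := sum_linear (-a) (-(c+1)) (2*b+1) 2 (by omega)
  have g2 := sum_linear (c+1) a (2*b+1) (-2) (by omega)
  have g3 := sum_linear (-c) c (2*a+1) 0 (by omega)
  have key : (2:ℤ) * (∑ x ∈ Icc (-a) (-(c+1)), ((2*b+1) + 2 * x)
      + ∑ x ∈ Icc (c+1) a, ((2*b+1) + (-2) * x)
      + ∑ x ∈ Icc (-c) c, ((2*a+1) + 0 * x))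
      = 2 * ((2*a+1)^2 - 2*(2*a-b)*(2*a-b+1)) := by
    linear_combination g1 + g2 + g3
  linarith

lemma card_even (a b a' b' : ℤ) (h1 : a = 2*a') (h2 : b = 2*b'+1) :
    ((E a b).filter fun p => 2 ∣ p.1 ∧ 2 ∣ p.2).card = (E a' b').card := by
  classical
  apply Finset.card_nbij' (fun p => (p.1/2, p.2/2)) (fun q => (2*q.1, 2*q.2))
  · intro p hp
    simp only [mem_coe, E, mem_filter, mem_product, mem_Icc, Int.abs_eq_natAbs] at hp ⊢
    omega
  · intro q hq
    simp only [mem_coe, E, mem_filter, mem_product, mem_Icc, Int.abs_eq_natAbs] at hq ⊢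
    omega
  · intro p hp
    simp only [mem_coe, E, mem_filter, mem_product, mem_Icc, Int.abs_eq_natAbs] at hp
    obtain ⟨-, h1, h2⟩ := hp
    ext <;> simp <;> omega
  · intro q hq
    ext <;> simp [mul_comm] <;> omega

lemma card_S (n : ℕ) (a' b' : ℤ) (ha' : 0 ≤ a')
    (h1 : w n - 2 = 2*a') (h2 : w (n+1) - 3 = 2*b'+1)
    (hab : a' ≤ b') (hb : b' ≤ 2 * a' - 1) :
    ((S n).card : ℤ)
      = ((2*(w n - 2)+1)^2 - 2*(2*(w n - 2)-(w (n+1) - 3))*(2*(w n - 2)-(w (n+1) - 3)+1))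
        - ((2*a'+1)^2 - 2*(2*a'-b')*(2*a'-b'+1)) := by
  classical
  have hsplit := Finset.card_filter_add_card_filter_not
    (s := Oct n) (p := fun p : ℤ × ℤ => 2 ∣ p.1 ∧ 2 ∣ p.2)
  have hOct : ((Oct n).card : ℤ)
      = (2*(w n - 2)+1)^2 - 2*(2*(w n - 2)-(w (n+1) - 3))*(2*(w n - 2)-(w (n+1) - 3)+1) :=
    card_E _ _ (by omega) (by omega) (by omega)
  have heven : (((Oct n).filter fun p => 2 ∣ p.1 ∧ 2 ∣ p.2).card : ℤ)
      = (2*a'+1)^2 - 2*(2*a'-b')*(2*a'-b'+1) := by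
    rw [show ((Oct n).filter fun p => 2 ∣ p.1 ∧ 2 ∣ p.2) = ((E (w n - 2) (w (n+1) - 3)).filter fun p => 2 ∣ p.1 ∧ 2 ∣ p.2) from rfl,
      card_even _ _ a' b' h1 h2]
    exact card_E _ _ ha' hab (by omega)
  have hS : ((S n).card : ℤ)
      = ((Oct n).card : ℤ) - (((Oct n).filter fun p => 2 ∣ p.1 ∧ 2 ∣ p.2).card : ℤ) := by
    have : (S n).card = ((Oct n).filter fun p => ¬ (2 ∣ p.1 ∧ 2 ∣ p.2)).card := rfl
    rw [this]
    push_cast [← hsplit]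
    ring
  rw [hS, hOct, heven]

theorem stmt_7 (n : ℕ) (hn : 1 ≤ n) :
    ((S n).card : ℤ) = 2 * (w n - 2) + 3 * (w n - 2) ^ 2
      - 6 * (w n - w (n - 1)) * (w n - w (n - 1) - 1) := by
  rcases Nat.even_or_odd n with he | ho
  · -- n = 2k, k ≥ 1
    obtain ⟨k, hk⟩ : ∃ k, n = 2 * k := by rcases he with ⟨r, hr⟩; exact ⟨r, by omega⟩
    have hk1 : 1 ≤ k := by omega
    set Q : ℤ := 2 ^ (k - 1) with hQ
    have hQ1 : 1 ≤ Q := one_le_pow₀ (by norm_num)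
    have hpow : (2:ℤ) ^ k = 2 * Q := by
      rw [hQ, ← pow_succ']
      congr 1; omega
    have hwn : w n = 6 * Q := by
      rw [w, if_pos (by omega : n % 2 = 0), show n / 2 = k by omega, hpow]; ring
    have hwn1 : w (n+1) = 8 * Q := by
      rw [w, if_neg (by omega : ¬ (n+1) % 2 = 0), show (n+1) / 2 = k by omega, hpow]; ring
    have hwm : w (n-1) = 4 * Q := by
      rw [w, if_neg (by omega : ¬ (n-1) % 2 = 0), show (n-1) / 2 = k - 1 by omega, ← hQ]; try ring
    have h := card_S n (3*Q - 1) (4*Q - 2) (by omega)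
      (by rw [hwn]; try ring) (by rw [hwn1]; try ring) (by omega) (by omega)
    rw [h, hwn, hwn1, hwm]; ring
  · -- n = 2k+1
    obtain ⟨k, hk⟩ := ho
    set P : ℤ := 2 ^ k with hP
    have hP1 : 1 ≤ P := one_le_pow₀ (by norm_num)
    have hwn : w n = 4 * P := by
      rw [w, if_neg (by omega : ¬ n % 2 = 0), show n / 2 = k by omega]
    have hwn1 : w (n+1) = 6 * P := by
      rw [w, if_pos (by omega : (n+1) % 2 = 0), show (n+1) / 2 = k + 1 by omega,
        pow_succ, hP]; ring
    have hwm : w (n-1) = 3 * P := by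
      rw [w, if_pos (by omega : (n-1) % 2 = 0), show (n-1) / 2 = k by omega]
    have h := card_S n (2*P - 1) (3*P - 2) (by omega)
      (by rw [hwn]; try ring) (by rw [hwn1]; try ring) (by omega) (by omega)
    rw [h, hwn, hwn1, hwm]; ring
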